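/- Let G be a finite p-group acting continuously on a pro-p tree T. Then G fixes a vertex of T. -/

import Mathlib

/-- A profinite graph: a topological space `T` (compact, Hausdorff and totally
disconnected in applications) with continuous incidence maps `d0 d1 : T → T`
satisfying `dᵢ ∘ dⱼ = dⱼ`. -/
structure ProfGraph (T : Type*) [TopologicalSpace T] where
  d0 : T → T
  d1 : T → T
  cont0 : Continuous d0
  cont1 : Continuous d1
  d00 : ∀ x, d0 (d0 x) = d0 x
  d01 : ∀ x, d0 (d1 x) = d1 x
  d10 : ∀ x, d1 (d0 x) = d0 x
  d11 : ∀ x, d1 (d1 x) = d1 x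

namespace ProfGraph

variable {T : Type*} [TopologicalSpace T] (G : ProfGraph T)

/-- `x` is a vertex; equivalently `d0 x = x`. -/
def IsVertex (x : T) : Prop := G.d0 x = x

/-- The space of vertices of `G`. -/
abbrev Verts : Type _ := {x : T // G.IsVertex x}

theorem isVertex_d0 (x : T) : G.IsVertex (G.d0 x) := G.d00 x
theorem isVertex_d1 (x : T) : G.IsVertex (G.d1 x) := G.d01 x

/-- The function `T → 𝔽_p` induced by a function on vertices via `d0`. -/
def ed0 (f : G.Verts → ZMod p) : T → ZMod p := fun x => f ⟨G.d0 x, G.isVertex_d0 x⟩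

/-- The function `T → 𝔽_p` induced by a function on vertices via `d1`. -/
def ed1 (f : G.Verts → ZMod p) : T → ZMod p := fun x => f ⟨G.d1 x, G.isVertex_d1 x⟩

/-- `G` is a pro-`p` tree: the sequence of free profinite `𝔽_p`-modules
`0 → 𝔽_p[[E*(T), *]] → 𝔽_p[[V(T)]] → 𝔽_p → 0` (with maps `e ↦ d1(e) − d0(e)` and the
augmentation) is exact.  By the duality between profinite and discrete `𝔽_p`-modules
this is expressed equivalently (and formalized here) by exactness of the dual sequence
of discrete modules of locally constant functions
`0 → 𝔽_p → LC(V(T), 𝔽_p) → {g ∈ LC(T, 𝔽_p) | g vanishes on V(T)} → 0`,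
where the second map sends `f` to `f∘d1 − f∘d0`:
(i) the vertex set is nonempty; (ii) a locally constant function on vertices with
`f∘d0 = f∘d1` is constant ("connectedness"); (iii) every locally constant function on
`T` vanishing on vertices has the form `f∘d1 − f∘d0` ("simple connectedness"). -/
def IsProPTree (p : ℕ) : Prop :=
  Nonempty G.Verts ∧
    (∀ f : G.Verts → ZMod p, IsLocallyConstant f →
      (∀ x : T, G.ed0 f x = G.ed1 f x) → ∃ c, ∀ v, f v = c) ∧
    (∀ g : T → ZMod p, IsLocallyConstant g → (∀ x, G.IsVertex x → g x = 0) →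
      ∃ f : G.Verts → ZMod p, IsLocallyConstant f ∧ ∀ x, g x = G.ed1 f x - G.ed0 f x)

end ProfGraph


open Finset
open scoped Classical


section GroupHelpers

variable {P : Type*} [Group P]

theorem pow_mod_of_pow_eq_one {g : P} {p : ℕ} (hg : g ^ p = 1) (a : ℕ) :
    g ^ (a % p) = g ^ a := by
  conv_rhs => rw [← Nat.div_add_mod a p]
  rw [pow_add, pow_mul, hg, one_pow, one_mul]

theorem smul_pow_fixed {T : Type*} [MulAction P T] {g : P} {x : T}
    (hx : g • x = x) : ∀ n : ℕ, g ^ n • x = x := by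
  intro n
  induction n with
  | zero => simp
  | succ n ih => rw [pow_succ, mul_smul, hx, ih]

theorem smul_fixed_of_pow_smul_fixed {T : Type*} [MulAction P T] {p : ℕ}
    (hp : p.Prime) {g : P} (hg : g ^ p = 1) {x : T} {k : ℕ} (h1 : 0 < k) (h2 : k < p)
    (hfix : g ^ k • x = x) : g • x = x := by
  have hcop : Nat.Coprime k p :=
    Nat.coprime_comm.mp ((Nat.Prime.coprime_iff_not_dvd hp).mpr (Nat.not_dvd_of_pos_of_lt h1 h2))
  have hk : g ^ k ∈ MulAction.stabilizer P x := hfix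
  have hpm : g ^ p ∈ MulAction.stabilizer P x := by
    rw [hg]; exact one_mem _
  have hbez : ((1 : ℕ) : ℤ) = k * Nat.gcdA k p + p * Nat.gcdB k p := by
    rw [← hcop]; exact Nat.gcd_eq_gcd_ab k p
  have hmem : g ∈ MulAction.stabilizer P x := by
    have : g = (g ^ k) ^ Nat.gcdA k p * (g ^ p) ^ Nat.gcdB k p := by
      rw [← zpow_natCast g k, ← zpow_natCast g p, ← zpow_mul, ← zpow_mul, ← zpow_add]
      rw [← hbez]
      norm_num
    rw [this]
    exact mul_mem (Subgroup.zpow_mem _ hk _) (Subgroup.zpow_mem _ hpm _)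
  exact hmem

end GroupHelpers

section Helpers

variable {T : Type*} [TopologicalSpace T]

theorem lc_ite {Y : Type*} {U : Set T} (hU : IsClopen U) (a b : Y) :
    IsLocallyConstant (fun x => if x ∈ U then a else b) := by
  intro s
  have he : (fun x => if x ∈ U then a else b) ⁻¹' s =
      (if a ∈ s then U else ∅) ∪ (if b ∈ s then Uᶜ else ∅) := by
    ext x
    by_cases hx : x ∈ U <;> by_cases ha : a ∈ s <;> by_cases hb : b ∈ s <;>
      simp [hx, ha, hb]
  rw [he]
  apply IsOpen.union <;> split_ifs
  · exact hU.isOpen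
  · exact isOpen_empty
  · exact hU.compl.isOpen
  · exact isOpen_empty

theorem lc_sum {ι M : Type*} [AddCommMonoid M] (s : Finset ι) (f : ι → T → M)
    (h : ∀ i ∈ s, IsLocallyConstant (f i)) :
    IsLocallyConstant (fun x => ∑ i ∈ s, f i x) := by
  induction s using Finset.induction_on with
  | empty => simp only [Finset.sum_empty]; exact IsLocallyConstant.const (0 : M)
  | @insert a s ha ih =>
    have he : (fun x => ∑ i ∈ insert a s, f i x) =
        fun x => f a x + ∑ i ∈ s, f i x := by
      funext x; rw [Finset.sum_insert ha]
    rw [he]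
    exact (h a (Finset.mem_insert_self a s)).add
      (ih fun i hi => h i (Finset.mem_insert_of_mem hi))

theorem exists_isClopen_sep [CompactSpace T] [T2Space T] [TotallyDisconnectedSpace T]
    {K L : Set T} (hK : IsCompact K) (hL : IsClosed L) (hd : Disjoint K L) :
    ∃ U : Set T, IsClopen U ∧ K ⊆ U ∧ Disjoint U L := by
  have hmem : ∀ x : K, ∃ V : Set T, IsClopen V ∧ (x : T) ∈ V ∧ V ⊆ Lᶜ := fun x =>
    compact_exists_isClopen_in_isOpen hL.isOpen_compl (Set.disjoint_left.mp hd x.2)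
  choose V hVc hVx hVsub using hmem
  obtain ⟨t, ht⟩ := hK.elim_finite_subcover V (fun x => (hVc x).isOpen)
    (fun x hx => Set.mem_iUnion.mpr ⟨⟨x, hx⟩, hVx ⟨x, hx⟩⟩)
  refine ⟨⋃ i ∈ t, V i, isClopen_biUnion_finset fun i _ => hVc i, ht, ?_⟩
  rw [Set.disjoint_left]
  rintro a ha haL
  obtain ⟨i, -, hai⟩ := Set.mem_iUnion₂.mp ha
  exact hVsub i hai haL

end Helpers

section Inv

variable {T : Type*} [TopologicalSpace T] [CompactSpace T] [T2Space T]
  [TotallyDisconnectedSpace T] {P : Type*} [Group P] [MulAction P T] {p : ℕ} {g : P}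

theorem exists_isClopen_sep_inv
    (hcont : ∀ h : P, Continuous fun x : T => h • x) (hg : g ^ p = 1) (hp : 0 < p)
    {K L : Set T} (hK : IsCompact K) (hKfix : ∀ x ∈ K, g • x = x)
    (hL : IsClosed L) (hd : Disjoint K L) :
    ∃ U : Set T, IsClopen U ∧ K ⊆ U ∧ Disjoint U L ∧ ∀ x : T, g • x ∈ U ↔ x ∈ U := by
  obtain ⟨C, hC, hKC, hCL⟩ := exists_isClopen_sep hK hL hd
  have hUdef : {x : T | ∀ n : ℕ, g ^ n • x ∈ C} =
      ⋂ n ∈ Finset.range p, (fun x => g ^ n • x) ⁻¹' C := by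
    ext x
    simp only [Set.mem_setOf_eq, Set.mem_iInter, Set.mem_preimage, Finset.mem_range]
    constructor
    · exact fun h n _ => h n
    · intro h n
      rw [← pow_mod_of_pow_eq_one hg n]
      exact h _ (Nat.mod_lt _ hp)
  refine ⟨{x : T | ∀ n : ℕ, g ^ n • x ∈ C}, ?_, ?_, ?_, ?_⟩
  · rw [hUdef]
    constructor
    · exact isClosed_iInter fun n => isClosed_iInter fun _ => (hC.preimage (hcont _)).isClosed
    · exact isOpen_biInter_finset fun n _ => (hC.preimage (hcont _)).isOpen
  · intro x hx n
    rw [smul_pow_fixed (hKfix x hx)]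
    exact hKC hx
  · rw [Set.disjoint_left]
    intro a ha haL
    have : a ∈ C := by
      have := ha 0
      simpa using this
    exact Set.disjoint_left.mp hCL this haL
  · intro x
    constructor
    · intro h m
      have h1 : g ^ (m + p - 1) • (g • x) ∈ C := h _
      have h2 : g ^ (m + p - 1) • (g • x) = g ^ m • x := by
        rw [← mul_smul, ← pow_succ]
        have : m + p - 1 + 1 = m + p := by omega
        rw [this, pow_add, hg, mul_one]
      rwa [h2] at h1
    · intro h n
      have : g ^ n • (g • x) = g ^ (n + 1) • x := by rw [← mul_smul, ← pow_succ]
      rw [this]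
      exact h (n + 1)

theorem exists_invariant_extension
    (hp : p.Prime) (hcont : ∀ h : P, Continuous fun x : T => h • x) (hg : g ^ p = 1)
    {A : Set T} (hA : IsClosed A) (hAfix : ∀ x ∈ A, g • x = x)
    {W : Set T} (hW : IsClosed W)
    (h : A → ZMod p) (hh : IsLocallyConstant h)
    (hhW : ∀ (x) (hx : x ∈ A), x ∈ W → h ⟨x, hx⟩ = 0) :
    ∃ H : T → ZMod p, IsLocallyConstant H ∧ (∀ (x) (hx : x ∈ A), H x = h ⟨x, hx⟩) ∧
      (∀ x ∈ W, H x = 0) ∧ ∀ x : T, H (g • x) = H x := by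
  haveI : Fact p.Prime := ⟨hp⟩
  haveI : NeZero p := ⟨hp.ne_zero⟩
  haveI : CompactSpace A := isCompact_iff_compactSpace.mp hA.isCompact
  have hfibc : ∀ i : ZMod p, IsCompact (Subtype.val '' (h ⁻¹' {i})) := by
    intro i
    refine IsCompact.image ?_ continuous_subtype_val
    refine IsClosed.isCompact ?_
    have : h ⁻¹' {i} = (h ⁻¹' {i}ᶜ)ᶜ := by simp
    rw [this]
    exact (hh _).isClosed_compl
  have key : ∀ i : ZMod p, ∃ U : Set T, IsClopen U ∧
      (i ≠ 0 → Subtype.val '' (h ⁻¹' {i}) ⊆ U) ∧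
      (∀ (x) (hx : x ∈ A), h ⟨x, hx⟩ ≠ i → x ∉ U) ∧
      (∀ x ∈ W, x ∉ U) ∧ (∀ x : T, g • x ∈ U ↔ x ∈ U) := by
    intro i
    by_cases hi : i = 0
    · exact ⟨∅, isClopen_empty, fun hj => absurd hi hj, by simp, by simp, by simp⟩
    · have hLc : IsClosed ((Subtype.val '' (h ⁻¹' {i}ᶜ)) ∪ W) := by
        refine IsClosed.union ?_ hW
        refine IsCompact.isClosed ?_
        refine IsCompact.image ?_ continuous_subtype_val
        refine IsClosed.isCompact ?_
        rw [Set.preimage_compl]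
        exact (hh {i}).isClosed_compl
      have hdisj : Disjoint (Subtype.val '' (h ⁻¹' {i})) ((Subtype.val '' (h ⁻¹' {i}ᶜ)) ∪ W) := by
        rw [Set.disjoint_left]
        rintro x ⟨a, ha, rfl⟩ hx
        rcases hx with hx | hx
        · obtain ⟨b, hb, hba⟩ := hx
          rw [Subtype.val_injective hba] at hb
          exact hb ha
        · have := hhW a.1 a.2 hx
          rw [Subtype.coe_eta] at this
          rw [Set.mem_preimage, Set.mem_singleton_iff] at ha
          rw [ha] at this
          exact hi this
      obtain ⟨U, hUc, hKU, hUL, hUinv⟩ := exists_isClopen_sep_inv hcont hg hp.pos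
        (hfibc i) (fun x hx => by
          obtain ⟨a, -, rfl⟩ := hx
          exact hAfix a.1 a.2) hLc hdisj
      refine ⟨U, hUc, fun _ => hKU, ?_, ?_, hUinv⟩
      · intro x hx hne hxU
        refine Set.disjoint_left.mp hUL hxU (Set.mem_union_left _ ?_)
        exact ⟨⟨x, hx⟩, hne, rfl⟩
      · intro x hxW hxU
        exact Set.disjoint_left.mp hUL hxU (Set.mem_union_right _ hxW)
  choose U hUc hUK hUA hUW hUinv using key
  refine ⟨fun x => ∑ i : ZMod p, if x ∈ U i then i else 0, ?_, ?_, ?_, ?_⟩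
  · apply lc_sum
    intro i _
    exact lc_ite (hUc i) i 0
  · intro x hx
    show (∑ i : ZMod p, if x ∈ U i then i else 0) = h ⟨x, hx⟩
    rw [Finset.sum_eq_single (h ⟨x, hx⟩)]
    · by_cases hz : h ⟨x, hx⟩ = 0
      · by_cases hmem : x ∈ U (h ⟨x, hx⟩)
        · rw [if_pos hmem]
        · rw [if_neg hmem, hz]
      · rw [if_pos (hUK _ hz ⟨⟨x, hx⟩, rfl, rfl⟩)]
    · intro i _ hne
      rw [if_neg]
      exact hUA i x hx (fun hc => hne hc.symm)
    · intro hmem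
      exact absurd (Finset.mem_univ _) hmem
  · intro x hxW
    refine Finset.sum_eq_zero fun i _ => ?_
    rw [if_neg (hUW i x hxW)]
  · intro x
    refine Finset.sum_congr rfl fun i _ => ?_
    by_cases hxi : x ∈ U i
    · rw [if_pos hxi, if_pos ((hUinv i x).mpr hxi)]
    · rw [if_neg hxi, if_neg (fun hc => hxi ((hUinv i x).mp hc))]

end Inv

section FD

variable {T : Type*} [TopologicalSpace T] [CompactSpace T] [T2Space T]
  [TotallyDisconnectedSpace T] {P : Type*} [Group P] [MulAction P T] {p : ℕ} {g : P}

theorem smul_pow_smul {g : P} (hg : g ^ p = 1) (a b : ℕ) (x : T) :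
    g ^ a • (g ^ b • x) = g ^ ((a + b) % p) • x := by
  rw [← mul_smul, ← pow_add, pow_mod_of_pow_eq_one hg]

theorem exists_fundamental_domain
    (hp : p.Prime) (hcont : ∀ h : P, Continuous fun x : T => h • x) (hg : g ^ p = 1)
    {S : Set T} (hS : IsCompact S)
    (hfree : ∀ x ∈ S, g • x ≠ x) :
    ∃ U : Set T, IsClopen U ∧ ∀ x ∈ S, ∃! j : ℕ, j < p ∧ g ^ j • x ∈ U := by
  have hppos : 0 < p := hp.pos
  -- Step 1 : pointwise clopen neighbourhoods
  have step1 : ∀ x ∈ S, ∃ V : Set T, IsClopen V ∧ x ∈ V ∧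
      ∀ w ∈ V, ∀ k : ℕ, 0 < k → k < p → g ^ k • w ∉ V := by
    intro x hx
    set B : Set T := (fun k : ℕ => g ^ k • x) '' {k | 0 < k ∧ k < p} with hB
    have hBfin : B.Finite := Set.Finite.image _ (Set.Finite.subset (Set.finite_Iio p)
      (fun k hk => hk.2))
    have hxB : x ∉ B := by
      rintro ⟨k, ⟨hk1, hk2⟩, hkx⟩
      exact hfree x hx (smul_fixed_of_pow_smul_fixed hp hg hk1 hk2 hkx)
    obtain ⟨W0, hW0c, hxW0, hW0B⟩ := exists_isClopen_sep (isCompact_singleton : IsCompact {x})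
      hBfin.isClosed (Set.disjoint_left.mpr (by
        intro a ha
        rw [Set.mem_singleton_iff] at ha
        subst ha
        exact hxB))
    refine ⟨W0 ∩ ⋂ k ∈ Finset.Ico 1 p, (fun w => g ^ k • w) ⁻¹' W0ᶜ, ?_, ?_, ?_⟩
    · refine IsClopen.inter hW0c ?_
      constructor
      · exact isClosed_iInter fun k => isClosed_iInter fun _ =>
          (hW0c.compl.preimage (hcont _)).isClosed
      · exact isOpen_biInter_finset fun k _ => (hW0c.compl.preimage (hcont _)).isOpen
    · refine ⟨hxW0 (Set.mem_singleton x), ?_⟩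
      refine Set.mem_iInter₂.mpr fun k hk => ?_
      rw [Finset.mem_Ico] at hk
      have : g ^ k • x ∈ B := ⟨k, ⟨hk.1, hk.2⟩, rfl⟩
      exact Set.disjoint_right.mp hW0B this
    · rintro w ⟨hwW0, hwI⟩ k hk1 hk2 ⟨hkW0, -⟩
      have := Set.mem_iInter₂.mp hwI k (Finset.mem_Ico.mpr ⟨hk1, hk2⟩)
      exact this hkW0
  choose! V hVc hVmem hVprop using step1
  -- Step 2 : finite subcover and enumeration
  obtain ⟨t, ht⟩ := hS.elim_finite_subcover (fun x : S => V x)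
    (fun x => (hVc x x.2).isOpen)
    (fun x hx => Set.mem_iUnion.mpr ⟨⟨x, hx⟩, hVmem x hx⟩)
  set n := t.card with hn
  set e := t.equivFin with he
  set Wf : ℕ → Set T := fun m => if hm : m < n then V ↑(e.symm ⟨m, hm⟩ : {i // i ∈ t}) else ∅
    with hWf
  have hWfc : ∀ m, IsClopen (Wf m) := by
    intro m
    rw [hWf]
    dsimp only
    split_ifs with hm
    · exact hVc _ (e.symm ⟨m, hm⟩ : {i // i ∈ t}).1.2
    · exact isClopen_empty
  have hWfprop : ∀ m, ∀ w ∈ Wf m, ∀ k : ℕ, 0 < k → k < p → g ^ k • w ∉ Wf m := by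
    intro m w hw k hk1 hk2
    rw [hWf] at hw ⊢
    dsimp only at hw ⊢
    split_ifs at hw ⊢ with hm
    · exact hVprop _ (e.symm ⟨m, hm⟩ : {i // i ∈ t}).1.2 w hw k hk1 hk2
    · exact absurd hw (Set.notMem_empty _)
  have hcover : ∀ x ∈ S, ∃ m < n, x ∈ Wf m := by
    intro x hx
    obtain ⟨i, hit, hxi⟩ := Set.mem_iUnion₂.mp (ht hx)
    refine ⟨e ⟨i, hit⟩, (e ⟨i, hit⟩).2, ?_⟩
    rw [hWf]
    dsimp only
    rw [dif_pos (e ⟨i, hit⟩).2]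
    have : (e.symm ⟨(e ⟨i, hit⟩ : Fin n), (e ⟨i, hit⟩).2⟩) = ⟨i, hit⟩ := by
      rw [Fin.eta]
      exact e.symm_apply_apply _
    rw [this]
    exact hxi
  -- PW m : points whose (partial) orbit meets Wf m
  set PW : ℕ → Set T := fun m => ⋃ k ∈ Finset.range p, (fun w => g ^ k • w) ⁻¹' Wf m with hPW
  have hPWmem : ∀ m x, x ∈ PW m ↔ ∃ k < p, g ^ k • x ∈ Wf m := by
    intro m x
    rw [hPW]
    simp [Set.mem_iUnion₂]
  have hPWshift : ∀ m (a : ℕ) (x : T), x ∈ PW m ↔ g ^ a • x ∈ PW m := by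
    intro m a x
    rw [hPWmem, hPWmem]
    constructor
    · rintro ⟨k, hk, hkW⟩
      refine ⟨(k + (p - a % p)) % p, Nat.mod_lt _ hppos, ?_⟩
      rw [smul_pow_smul hg]
      have harith : ((k + (p - a % p)) % p + a) % p = k := by
        rw [Nat.mod_add_mod]
        have h1 := Nat.div_add_mod a p
        have h2 : a % p < p := Nat.mod_lt _ hppos
        have h3 : k + (p - a % p) + a = k + (p * (a / p) + p) := by
          set q := p * (a / p)
          omega
        rw [h3, show k + (p * (a / p) + p) = k + p * (a / p + 1) by ring,
          Nat.add_mul_mod_self_left, Nat.mod_eq_of_lt hk]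
      rw [harith]
      exact hkW
    · rintro ⟨k, hk, hkW⟩
      refine ⟨(k + a) % p, Nat.mod_lt _ hppos, ?_⟩
      rw [pow_mod_of_pow_eq_one hg, pow_add, mul_smul]
      exact hkW
  -- the fundamental domain
  refine ⟨⋃ m ∈ Finset.range n, (Wf m \ ⋃ l ∈ Finset.range m, PW l), ?_, ?_⟩
  · refine isClopen_biUnion_finset fun m _ => ?_
    refine IsClopen.diff (hWfc m) ?_
    refine isClopen_biUnion_finset fun l _ => ?_
    rw [hPW]
    exact isClopen_biUnion_finset fun k _ => (hWfc l).preimage (hcont _)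
  · intro x hx
    -- existence
    have hex : ∃ m, m < n ∧ x ∈ PW m := by
      obtain ⟨m, hm, hxm⟩ := hcover x hx
      refine ⟨m, hm, (hPWmem m x).mpr ⟨0, hppos, ?_⟩⟩
      rw [pow_zero, one_smul]
      exact hxm
    set m₁ := Nat.find hex with hm₁
    obtain ⟨hm₁n, hm₁PW⟩ := Nat.find_spec hex
    obtain ⟨k, hk, hkW⟩ := (hPWmem m₁ x).mp hm₁PW
    have hsame : ∀ m, ∀ a b : ℕ, a < b → b < p → g ^ a • x ∈ Wf m → g ^ b • x ∈ Wf m →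
        False := by
      intro m a b hab hbp ha hb
      have hd : g ^ (b - a) • (g ^ a • x) = g ^ b • x := by
        rw [smul_pow_smul hg]
        have hba : b - a + a = b := by omega
        rw [hba, Nat.mod_eq_of_lt hbp]
      exact hWfprop m _ ha (b - a) (by omega) (by omega) (hd ▸ hb)
    have hmain : ∀ j : ℕ, (j < p ∧ g ^ j • x ∈ ⋃ m ∈ Finset.range n,
        (Wf m \ ⋃ l ∈ Finset.range m, PW l)) ↔ j = k := by
      intro j
      constructor
      · rintro ⟨hjp, hjU⟩
        obtain ⟨mj, hmjr, hjW, hjPW⟩ := Set.mem_iUnion₂.mp hjU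
        rw [Finset.mem_range] at hmjr
        have hxPWmj : x ∈ PW mj := (hPWshift mj j x).mpr
          ((hPWmem mj _).mpr ⟨0, hppos, by rw [pow_zero, one_smul]; exact hjW⟩)
        have hmj1 : m₁ ≤ mj := Nat.find_min' hex ⟨hmjr, hxPWmj⟩
        have hmj2 : ¬ m₁ < mj := by
          intro hlt
          exact hjPW (Set.mem_biUnion (Finset.mem_range.mpr hlt)
            ((hPWshift m₁ j x).mp hm₁PW))
        have hmm : mj = m₁ := by omega
        rw [hmm] at hjW
        rcases lt_trichotomy j k with hlt | heq | hgt
        · exact (hsame m₁ j k hlt hk hjW hkW).elim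
        · exact heq
        · exact (hsame m₁ k j hgt hjp hkW hjW).elim
      · intro hje
        rw [hje]
        refine ⟨hk, Set.mem_biUnion (Finset.mem_range.mpr hm₁n) ⟨hkW, ?_⟩⟩
        intro hcon
        obtain ⟨l, hl, hlPW⟩ := Set.mem_iUnion₂.mp hcon
        rw [Finset.mem_range] at hl
        exact Nat.find_min hex hl ⟨lt_trans hl hm₁n, (hPWshift l k x).mpr hlPW⟩
    exact ⟨k, (hmain k).mpr rfl, fun j hj => (hmain j).mp hj⟩

end FD

theorem sum_shift {M : Type*} [AddCommGroup M] (p : ℕ) (F : ℕ → M) (hper : F p = F 0) :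
    ∑ j ∈ Finset.range p, F (j + 1) = ∑ j ∈ Finset.range p, F j := by
  have h1 := Finset.sum_range_succ' F p
  have h2 := Finset.sum_range_succ F p
  rw [h2, hper] at h1
  exact add_right_cancel h1.symm


section CA

variable {T : Type*} [TopologicalSpace T] [CompactSpace T] [T2Space T]
  [TotallyDisconnectedSpace T] {P : Type*} [Group P] [MulAction P T] {p : ℕ} {g : P}

theorem pow_smul_invariant {k : T → ZMod p} (hkinv : ∀ x : T, k (g • x) = k x) :
    ∀ (j : ℕ) (x : T), k (g ^ j • x) = k x := by
  intro j
  induction j with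
  | zero => intro x; rw [pow_zero, one_smul]
  | succ j ih =>
    intro x
    rw [pow_succ, mul_smul, ih (g • x), hkinv]

theorem claimA (hp : p.Prime) (hcont : ∀ h : P, Continuous fun x : T => h • x)
    (hg : g ^ p = 1) (k : T → ZMod p) (hk : IsLocallyConstant k)
    (hkinv : ∀ x : T, k (g • x) = k x) (hkfix : ∀ x : T, g • x = x → k x = 0) :
    ∃ c : T → ZMod p, IsLocallyConstant c ∧ (∀ x, c x ≠ 0 → k x ≠ 0) ∧
      ∀ x, k x = ∑ j ∈ Finset.range p, c (g ^ j • x) := by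
  have hS : IsCompact {x : T | k x ≠ 0} := by
    refine IsClosed.isCompact ?_
    have : {x : T | k x ≠ 0} = (k ⁻¹' {0})ᶜ := by
      ext x; simp [Set.mem_preimage]
    rw [this]
    exact (hk {0}).isClosed_compl
  have hfree : ∀ x ∈ {x : T | k x ≠ 0}, g • x ≠ x := fun x hx hc => hx (hkfix x hc)
  obtain ⟨U, hUc, hU⟩ := exists_fundamental_domain hp hcont hg hS hfree
  refine ⟨fun x => if x ∈ U then k x else 0, ?_, ?_, ?_⟩
  · have : (fun x => if x ∈ U then k x else 0) =
        fun x => k x * (if x ∈ U then 1 else 0) := by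
      funext x
      split_ifs <;> simp
    rw [this]
    exact hk.mul (lc_ite hUc 1 0)
  · intro x hx
    intro hkx
    apply hx
    show (if x ∈ U then k x else 0) = 0
    split_ifs <;> simp [hkx]
  · intro x
    by_cases hxS : k x = 0
    · rw [hxS]
      refine (Finset.sum_eq_zero fun j _ => ?_).symm
      have hz : k (g ^ j • x) = 0 := by rw [pow_smul_invariant hkinv, hxS]
      show (if g ^ j • x ∈ U then k (g ^ j • x) else 0) = 0
      split_ifs <;> simp [hz]
    · obtain ⟨j₀, ⟨hj₀p, hj₀U⟩, huniq⟩ := hU x hxS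
      rw [Finset.sum_eq_single_of_mem j₀ (Finset.mem_range.mpr hj₀p)]
      · show k x = if g ^ j₀ • x ∈ U then k (g ^ j₀ • x) else 0
        rw [if_pos hj₀U, pow_smul_invariant hkinv]
      · intro b hb hbne
        show (if g ^ b • x ∈ U then k (g ^ b • x) else 0) = 0
        rw [if_neg]
        intro hbU
        exact hbne (huniq b ⟨Finset.mem_range.mp hb, hbU⟩)

theorem tau_div (hg : g ^ p = 1) (c : T → ZMod p) :
    (∀ x : T, (∑ j ∈ Finset.range p, c (g ^ j • (g • x))) =
        ∑ j ∈ Finset.range p, c (g ^ j • x)) ∧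
      ∀ x : T, (∑ j ∈ Finset.range p, (j : ZMod p) * c (g ^ j • (g • x))) =
        (∑ j ∈ Finset.range p, (j : ZMod p) * c (g ^ j • x)) -
          ∑ j ∈ Finset.range p, c (g ^ j • x) := by
  have hstep : ∀ (j : ℕ) (x : T), g ^ j • (g • x) = g ^ (j + 1) • x := by
    intro j x
    rw [pow_succ, mul_smul]
  have hper : ∀ x : T, g ^ p • x = g ^ 0 • x := by
    intro x
    rw [hg, pow_zero]
  constructor
  · intro x
    have := sum_shift p (fun j => c (g ^ j • x)) (congrArg c (hper x))
    rw [← this]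
    exact Finset.sum_congr rfl fun j _ => by rw [hstep]
  · intro x
    have hF : ∀ j : ℕ, (j : ZMod p) * c (g ^ j • (g • x)) =
        (fun j : ℕ => ((j : ZMod p) - 1) * c (g ^ j • x)) (j + 1) := by
      intro j
      dsimp only
      rw [hstep]
      push_cast
      ring
    have hper2 : (fun j : ℕ => ((j : ZMod p) - 1) * c (g ^ j • x)) p =
        (fun j : ℕ => ((j : ZMod p) - 1) * c (g ^ j • x)) 0 := by
      dsimp only
      rw [ZMod.natCast_self, Nat.cast_zero, hg, pow_zero]
    calc (∑ j ∈ Finset.range p, (j : ZMod p) * c (g ^ j • (g • x)))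
        = ∑ j ∈ Finset.range p, (fun j : ℕ => ((j : ZMod p) - 1) * c (g ^ j • x)) (j + 1) :=
          Finset.sum_congr rfl fun j _ => hF j
      _ = ∑ j ∈ Finset.range p, ((j : ZMod p) - 1) * c (g ^ j • x) :=
          sum_shift p (fun j : ℕ => ((j : ZMod p) - 1) * c (g ^ j • x)) hper2
      _ = (∑ j ∈ Finset.range p, (j : ZMod p) * c (g ^ j • x)) -
          ∑ j ∈ Finset.range p, c (g ^ j • x) := by
          rw [← Finset.sum_sub_distrib]
          exact Finset.sum_congr rfl fun j _ => by ring

end CA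

theorem cyclic_fixes_vertex (p : ℕ) [Fact p.Prime] {T : Type*} [TopologicalSpace T]
    [CompactSpace T] [T2Space T] [TotallyDisconnectedSpace T]
    (G : ProfGraph T) (htree : G.IsProPTree p)
    {P : Type*} [Group P] [MulAction P T]
    (hcont : ∀ g : P, Continuous fun x : T => g • x)
    (hd0 : ∀ (g : P) (x : T), G.d0 (g • x) = g • G.d0 x)
    (hd1 : ∀ (g : P) (x : T), G.d1 (g • x) = g • G.d1 x)
    (g : P) (hg : g ^ p = 1) :
    ∃ v : T, G.IsVertex v ∧ g • v = v := by
  have hp : p.Prime := Fact.out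
  by_contra hcon
  push_neg at hcon
  have hd1' : ∀ x : T, G.IsVertex x → G.d1 x = x := fun x hx => by
    conv_lhs => rw [← hx]
    rw [G.d10, hx]
  have hvsmul : ∀ (h : P) (x : T), G.IsVertex x → G.IsVertex (h • x) := by
    intro h x hx
    show G.d0 (h • x) = h • x
    rw [hd0, hx]
  have hVclosed : IsClosed {x : T | G.IsVertex x} := isClosed_eq G.cont0 continuous_id
  obtain ⟨U, hUc, hU⟩ := exists_fundamental_domain hp hcont hg hVclosed.isCompact
    (fun x hx => hcon x hx)
  set f₀ : T → ZMod p := fun x => ∑ j ∈ Finset.range p, if g ^ j • x ∈ U then (j : ZMod p) else 0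
    with hf₀
  have hf₀lc : IsLocallyConstant f₀ := by
    apply lc_sum
    intro j _
    exact (lc_ite hUc (j : ZMod p) 0).comp_continuous (hcont (g ^ j))
  have heval : ∀ x, G.IsVertex x → ∀ j₀ : ℕ, j₀ < p → g ^ j₀ • x ∈ U →
      f₀ x = (j₀ : ZMod p) := by
    intro x hx j₀ hj₀ hjU
    obtain ⟨j₁, -, huniq⟩ := hU x hx
    rw [hf₀]
    dsimp only
    rw [Finset.sum_eq_single_of_mem j₀ (Finset.mem_range.mpr hj₀)]
    · rw [if_pos hjU]
    · intro b hb hbne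
      rw [if_neg]
      intro hbU
      exact hbne ((huniq b ⟨Finset.mem_range.mp hb, hbU⟩).trans (huniq j₀ ⟨hj₀, hjU⟩).symm)
  have hkey : ∀ x : T, G.IsVertex x → f₀ (g • x) = f₀ x - 1 := by
    intro x hx
    obtain ⟨j₀, ⟨hj₀p, hj₀U⟩, -⟩ := hU x hx
    have h1 : f₀ x = (j₀ : ZMod p) := heval x hx j₀ hj₀p hj₀U
    have hgx : G.IsVertex (g • x) := hvsmul g x hx
    have hj₁U : g ^ ((j₀ + (p - 1)) % p) • (g • x) ∈ U := by
      have hss : g ^ ((j₀ + (p - 1)) % p) • (g • x) = g ^ ((j₀ + (p - 1)) % p + 1) • x := by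
        rw [pow_succ, mul_smul]
      rw [hss]
      have h2 : g ^ ((j₀ + (p - 1)) % p + 1) = g ^ j₀ := by
        rw [← pow_mod_of_pow_eq_one hg ((j₀ + (p - 1)) % p + 1)]
        congr 1
        rw [Nat.mod_add_mod]
        have hpp : j₀ + (p - 1) + 1 = j₀ + p := by omega
        rw [hpp, Nat.add_mod_right, Nat.mod_eq_of_lt hj₀p]
      rw [h2]
      exact hj₀U
    have h3 : f₀ (g • x) = (((j₀ + (p - 1)) % p : ℕ) : ZMod p) :=
      heval _ hgx _ (Nat.mod_lt _ hp.pos) hj₁U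
    have hcast : ((p - 1 : ℕ) : ZMod p) = -1 := by
      have hc2 : ((p - 1 : ℕ) : ZMod p) + 1 = 0 := by
        rw [← Nat.cast_one (R := ZMod p), ← Nat.cast_add]
        have hpp : p - 1 + 1 = p := by omega
        rw [hpp, ZMod.natCast_self]
      exact eq_neg_of_add_eq_zero_left hc2
    rw [h3, h1, ZMod.natCast_mod, Nat.cast_add, hcast]
    ring
  set cb : T → ZMod p := fun x => f₀ (G.d1 x) - f₀ (G.d0 x) with hcb
  have hcblc : IsLocallyConstant cb :=
    (hf₀lc.comp_continuous G.cont1).sub (hf₀lc.comp_continuous G.cont0)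
  have hcbV : ∀ x, G.IsVertex x → cb x = 0 := by
    intro x hx
    rw [hcb]
    dsimp only
    rw [hd1' x hx]
    rw [show G.d0 x = x from hx]
    exact sub_self _
  have hcbinv : ∀ x, cb (g • x) = cb x := by
    intro x
    rw [hcb]
    dsimp only
    rw [hd1, hd0, hkey _ (G.isVertex_d1 x), hkey _ (G.isVertex_d0 x)]
    ring
  have hcbfix : ∀ x : T, g • x = x → cb x = 0 := by
    intro x hfx
    exfalso
    apply hcon (G.d0 x) (G.isVertex_d0 x)
    rw [← hd0, hfx]
  obtain ⟨c, hclc, hcsupp, hcsum⟩ := claimA hp hcont hg cb hcblc hcbinv hcbfix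
  have hcV : ∀ x, G.IsVertex x → c x = 0 := by
    intro x hx
    by_contra hne
    exact hcsupp x hne (hcbV x hx)
  obtain ⟨f₁, hf₁lc, hf₁⟩ := htree.2.2 c hclc hcV
  set Fv : G.Verts → ZMod p := fun v => ∑ j ∈ Finset.range p,
    f₁ ⟨g ^ j • (v : T), hvsmul _ _ v.2⟩ with hFv
  have hFvlc : IsLocallyConstant Fv := by
    apply lc_sum
    intro j _
    exact hf₁lc.comp_continuous
      (Continuous.subtype_mk ((hcont (g ^ j)).comp continuous_subtype_val) _)
  set Φ : G.Verts → ZMod p := fun v => f₀ (v : T) - Fv v with hPhi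
  have hΦlc : IsLocallyConstant Φ := (hf₀lc.comp_continuous continuous_subtype_val).sub hFvlc
  have hδ : ∀ x : T, G.ed0 Φ x = G.ed1 Φ x := by
    intro x
    show Φ ⟨G.d0 x, G.isVertex_d0 x⟩ = Φ ⟨G.d1 x, G.isVertex_d1 x⟩
    have hFd : Fv ⟨G.d1 x, G.isVertex_d1 x⟩ - Fv ⟨G.d0 x, G.isVertex_d0 x⟩ = cb x := by
      rw [hFv]
      dsimp only
      rw [← Finset.sum_sub_distrib, hcsum x]
      refine Finset.sum_congr rfl fun j _ => ?_
      rw [hf₁ (g ^ j • x)]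
      show f₁ ⟨g ^ j • G.d1 x, _⟩ - f₁ ⟨g ^ j • G.d0 x, _⟩ =
        f₁ ⟨G.d1 (g ^ j • x), _⟩ - f₁ ⟨G.d0 (g ^ j • x), _⟩
      congr 1
      · exact congrArg f₁ (Subtype.ext (hd1 (g ^ j) x).symm)
      · exact congrArg f₁ (Subtype.ext (hd0 (g ^ j) x).symm)
    have hcb' : cb x = f₀ (G.d1 x) - f₀ (G.d0 x) := rfl
    rw [hPhi]
    dsimp only
    linear_combination hFd + hcb'
  obtain ⟨a, ha⟩ := htree.2.1 Φ hΦlc hδ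
  obtain ⟨v₀⟩ := htree.1
  have hFvinv : Fv ⟨g • (v₀ : T), hvsmul g _ v₀.2⟩ = Fv v₀ := by
    rw [hFv]
    dsimp only
    have hterm : ∀ j : ℕ, f₁ ⟨g ^ j • (g • (v₀ : T)), hvsmul _ _ (hvsmul g _ v₀.2)⟩ =
        (fun j : ℕ => f₁ ⟨g ^ j • (v₀ : T), hvsmul _ _ v₀.2⟩) (j + 1) := by
      intro j
      dsimp only
      congr 1
      apply Subtype.ext
      show g ^ j • (g • (v₀ : T)) = g ^ (j + 1) • (v₀ : T)
      rw [pow_succ, mul_smul]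
    have hper : (fun j : ℕ => f₁ ⟨g ^ j • (v₀ : T), hvsmul _ _ v₀.2⟩) p =
        (fun j : ℕ => f₁ ⟨g ^ j • (v₀ : T), hvsmul _ _ v₀.2⟩) 0 := by
      dsimp only
      congr 1
      apply Subtype.ext
      show g ^ p • (v₀ : T) = g ^ 0 • (v₀ : T)
      rw [hg, pow_zero]
    calc ∑ j ∈ Finset.range p, f₁ ⟨g ^ j • (g • (v₀ : T)), hvsmul _ _ (hvsmul g _ v₀.2)⟩
        = ∑ j ∈ Finset.range p,
            (fun j : ℕ => f₁ ⟨g ^ j • (v₀ : T), hvsmul _ _ v₀.2⟩) (j + 1) :=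
          Finset.sum_congr rfl fun j _ => hterm j
      _ = ∑ j ∈ Finset.range p, (fun j : ℕ => f₁ ⟨g ^ j • (v₀ : T), hvsmul _ _ v₀.2⟩) j :=
          sum_shift p (fun j : ℕ => f₁ ⟨g ^ j • (v₀ : T), hvsmul _ _ v₀.2⟩) hper
  have h1 := ha v₀
  have h2 := ha ⟨g • (v₀ : T), hvsmul g _ v₀.2⟩
  rw [hPhi] at h1 h2
  dsimp only at h1 h2
  rw [hFvinv] at h2
  have h2' : f₀ (g • (v₀ : T)) - Fv v₀ = a := h2
  rw [hkey _ v₀.2] at h2'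
  haveI : Fact (1 < p) := ⟨hp.one_lt⟩
  have hzero : (1 : ZMod p) = 0 := by linear_combination h1 - h2'
  exact one_ne_zero hzero

def subGraph {T : Type*} [TopologicalSpace T] (G : ProfGraph T) {P : Type*} [Group P]
    [MulAction P T] (g : P)
    (hd0g : ∀ x : T, G.d0 (g • x) = g • G.d0 x)
    (hd1g : ∀ x : T, G.d1 (g • x) = g • G.d1 x) :
    ProfGraph {x : T // g • x = x} where
  d0 x := ⟨G.d0 x.1, by rw [← hd0g x.1, x.2]⟩
  d1 x := ⟨G.d1 x.1, by rw [← hd1g x.1, x.2]⟩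
  cont0 := Continuous.subtype_mk (G.cont0.comp continuous_subtype_val)
    (fun x => by show g • G.d0 x.1 = G.d0 x.1; rw [← hd0g x.1, x.2])
  cont1 := Continuous.subtype_mk (G.cont1.comp continuous_subtype_val)
    (fun x => by show g • G.d1 x.1 = G.d1 x.1; rw [← hd1g x.1, x.2])
  d00 x := Subtype.ext (G.d00 x.1)
  d01 x := Subtype.ext (G.d01 x.1)
  d10 x := Subtype.ext (G.d10 x.1)
  d11 x := Subtype.ext (G.d11 x.1)

theorem subtree_isProPTree (p : ℕ) [Fact p.Prime] {T : Type*} [TopologicalSpace T]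
    [CompactSpace T] [T2Space T] [TotallyDisconnectedSpace T]
    (G : ProfGraph T) (htree : G.IsProPTree p)
    {P : Type*} [Group P] [MulAction P T]
    (hcont : ∀ g : P, Continuous fun x : T => g • x)
    (hd0 : ∀ (g : P) (x : T), G.d0 (g • x) = g • G.d0 x)
    (hd1 : ∀ (g : P) (x : T), G.d1 (g • x) = g • G.d1 x)
    (g : P) (hg : g ^ p = 1) :
    (subGraph G g (hd0 g) (hd1 g)).IsProPTree p := by
  have hp : p.Prime := Fact.out
  set Gd := subGraph G g (hd0 g) (hd1 g) with hGd
  have hd1' : ∀ x : T, G.IsVertex x → G.d1 x = x := fun x hx => by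
    conv_lhs => rw [← hx]
    rw [G.d10, hx]
  have hvsmul : ∀ (h : P) (x : T), G.IsVertex x → G.IsVertex (h • x) := by
    intro h x hx
    show G.d0 (h • x) = h • x
    rw [hd0, hx]
  refine ⟨?_, ?_, ?_⟩
  · obtain ⟨v, hv, hgv⟩ := cyclic_fixes_vertex p G htree hcont hd0 hd1 g hg
    exact ⟨⟨⟨v, hgv⟩, Subtype.ext hv⟩⟩
  · -- connectedness of the fixed subtree
    intro f hf hf01
    set A : Set T := {x | G.IsVertex x ∧ g • x = x} with hA
    have hAc : IsClosed A := by
      have : A = {x | G.IsVertex x} ∩ {x | g • x = x} := rfl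
      rw [this]
      exact IsClosed.inter (isClosed_eq G.cont0 continuous_id)
        (isClosed_eq (hcont g) continuous_id)
    have h'lc : IsLocallyConstant
        (fun a : ↥A => f ⟨⟨a.1, a.2.2⟩, Subtype.ext a.2.1⟩) :=
      hf.comp_continuous (Continuous.subtype_mk
        (Continuous.subtype_mk continuous_subtype_val _) _)
    obtain ⟨H, hHlc, hHA, -, hHinv⟩ := exists_invariant_extension hp hcont hg hAc
      (fun x hx => hx.2) isClosed_empty
      (fun a : ↥A => f ⟨⟨a.1, a.2.2⟩, Subtype.ext a.2.1⟩) h'lc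
      (fun x hx hW => absurd hW (Set.notMem_empty x))
    set k : T → ZMod p := fun x => H (G.d1 x) - H (G.d0 x) with hk
    have hklc : IsLocallyConstant k :=
      (hHlc.comp_continuous G.cont1).sub (hHlc.comp_continuous G.cont0)
    have hkV : ∀ x : T, G.IsVertex x → k x = 0 := by
      intro x hx
      rw [hk]
      dsimp only
      rw [hd1' x hx, show G.d0 x = x from hx]
      exact sub_self _
    have hkinv : ∀ x : T, k (g • x) = k x := by
      intro x
      rw [hk]
      dsimp only
      rw [hd1, hd0, hHinv, hHinv]
    have hkfix : ∀ x : T, g • x = x → k x = 0 := by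
      intro x hfx
      have hd1A : G.d1 x ∈ A := ⟨G.isVertex_d1 x, by rw [← hd1 g x, hfx]⟩
      have hd0A : G.d0 x ∈ A := ⟨G.isVertex_d0 x, by rw [← hd0 g x, hfx]⟩
      rw [hk]
      dsimp only
      rw [hHA _ hd1A, hHA _ hd0A]
      exact sub_eq_zero_of_eq (hf01 ⟨x, hfx⟩).symm
    obtain ⟨c, hclc, hcsupp, hcsum⟩ := claimA hp hcont hg k hklc hkinv hkfix
    set m : T → ZMod p := fun x => ∑ j ∈ Finset.range p, (j : ZMod p) * c (g ^ j • x) with hm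
    have hmlc : IsLocallyConstant m := by
      apply lc_sum
      intro j _
      exact (IsLocallyConstant.const ((j : ZMod p))).mul
        (hclc.comp_continuous (hcont (g ^ j)))
    have hcV : ∀ x : T, G.IsVertex x → c x = 0 := by
      intro x hx
      by_contra hne
      exact hcsupp x hne (hkV x hx)
    have hmV : ∀ x : T, G.IsVertex x → m x = 0 := by
      intro x hx
      rw [hm]
      dsimp only
      refine Finset.sum_eq_zero fun j _ => ?_
      rw [hcV _ (hvsmul _ _ hx), mul_zero]
    obtain ⟨f₁, hf₁lc, hf₁⟩ := htree.2.2 m hmlc hmV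
    have hm_shift : ∀ x : T, m (g • x) = m x - k x := by
      intro x
      have h1 := (tau_div hg c).2 x
      rw [hm]
      dsimp only
      rw [h1, ← hcsum x]
    set Φ : G.Verts → ZMod p :=
      fun v => H (v : T) - (f₁ v - f₁ ⟨g • (v : T), hvsmul g _ v.2⟩) with hΦ
    have hΦlc : IsLocallyConstant Φ := by
      refine (hHlc.comp_continuous continuous_subtype_val).sub (hf₁lc.sub ?_)
      exact hf₁lc.comp_continuous
        (Continuous.subtype_mk ((hcont g).comp continuous_subtype_val) _)
    have hδ : ∀ x : T, G.ed0 Φ x = G.ed1 Φ x := by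
      intro x
      show Φ ⟨G.d0 x, G.isVertex_d0 x⟩ = Φ ⟨G.d1 x, G.isVertex_d1 x⟩
      rw [hΦ]
      dsimp only
      have e1 : f₁ ⟨g • G.d1 x, hvsmul g _ (G.isVertex_d1 x)⟩ =
          f₁ ⟨G.d1 (g • x), G.isVertex_d1 (g • x)⟩ :=
        congrArg f₁ (Subtype.ext (hd1 g x).symm)
      have e0 : f₁ ⟨g • G.d0 x, hvsmul g _ (G.isVertex_d0 x)⟩ =
          f₁ ⟨G.d0 (g • x), G.isVertex_d0 (g • x)⟩ :=
        congrArg f₁ (Subtype.ext (hd0 g x).symm)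
      have h1 : m x = f₁ ⟨G.d1 x, G.isVertex_d1 x⟩ - f₁ ⟨G.d0 x, G.isVertex_d0 x⟩ := hf₁ x
      have h2 : m (g • x) = f₁ ⟨G.d1 (g • x), G.isVertex_d1 (g • x)⟩ -
          f₁ ⟨G.d0 (g • x), G.isVertex_d0 (g • x)⟩ := hf₁ (g • x)
      have h3 : m (g • x) = m x - k x := hm_shift x
      have h4 : k x = H (G.d1 x) - H (G.d0 x) := rfl
      linear_combination h2 - h1 - h3 + h4 - e1 + e0
    obtain ⟨a, ha⟩ := htree.2.1 Φ hΦlc hδ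
    refine ⟨a, ?_⟩
    intro y
    have hvert : G.IsVertex y.1.1 := congrArg Subtype.val y.2
    have hfx : g • y.1.1 = y.1.1 := y.1.2
    have hHx : H y.1.1 = f y := by
      rw [hHA y.1.1 ⟨hvert, hfx⟩]
    have hphi := ha ⟨y.1.1, hvert⟩
    rw [hΦ] at hphi
    dsimp only at hphi
    have he : f₁ ⟨g • y.1.1, hvsmul g _ hvert⟩ = f₁ ⟨y.1.1, hvert⟩ :=
      congrArg f₁ (Subtype.ext hfx)
    rw [he, sub_self, sub_zero] at hphi
    rw [← hHx, hphi]
  · -- simple connectedness of the fixed subtree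
    intro q hq hqV
    set A : Set T := {x | g • x = x} with hA
    have hAc : IsClosed A := isClosed_eq (hcont g) continuous_id
    set W : Set T := {x | G.IsVertex x} with hW
    have hWc : IsClosed W := isClosed_eq G.cont0 continuous_id
    have h'lc : IsLocallyConstant (fun a : ↥A => q ⟨a.1, a.2⟩) :=
      hq.comp_continuous (Continuous.subtype_mk continuous_subtype_val _)
    obtain ⟨H, hHlc, hHA, hHW, -⟩ := exists_invariant_extension hp hcont hg hAc
      (fun x hx => hx) hWc (fun a : ↥A => q ⟨a.1, a.2⟩) h'lc
      (fun x hx hxW => hqV ⟨x, hx⟩ (Subtype.ext hxW))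
    obtain ⟨f₁, hf₁lc, hf₁⟩ := htree.2.2 H hHlc hHW
    refine ⟨fun y => f₁ ⟨y.1.1, congrArg Subtype.val y.2⟩, ?_, ?_⟩
    · exact hf₁lc.comp_continuous (Continuous.subtype_mk
        (continuous_subtype_val.comp continuous_subtype_val) _)
    · intro y
      calc q y = H y.1 := (hHA y.1 y.2).symm
        _ = G.ed1 f₁ y.1 - G.ed0 f₁ y.1 := hf₁ y.1
        _ = _ := rfl

theorem exists_central_order (p : ℕ) [Fact p.Prime] {P : Type*} [Group P] [Finite P]
    [Nontrivial P] (hP : IsPGroup p P) :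
    ∃ g : P, orderOf g = p ∧ g ∈ Subgroup.center P := by
  haveI := hP.center_nontrivial
  have hPZ : IsPGroup p (Subgroup.center P) := hP.to_subgroup _
  obtain ⟨n, hn⟩ := hPZ.exists_card_eq
  have hn1 : 1 ≤ n := by
    by_contra hcon
    have hn0 : n = 0 := by omega
    rw [hn0, pow_zero] at hn
    have := (Nat.card_eq_one_iff_unique.mp hn).1
    exact false_of_nontrivial_of_subsingleton (Subgroup.center P)
  have hdvd : p ∣ Nat.card (Subgroup.center P) := by
    rw [hn]
    exact dvd_pow_self p (by omega)
  obtain ⟨x, hx⟩ := exists_prime_orderOf_dvd_card' p hdvd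
  exact ⟨↑x, (Subgroup.orderOf_coe x).trans hx, x.2⟩

universe u v

theorem aux_fixes (p : ℕ) (hfp : Fact p.Prime) (n : ℕ) :
    ∀ {T : Type u} [TopologicalSpace T] [CompactSpace T] [T2Space T]
      [TotallyDisconnectedSpace T] (G : ProfGraph T), G.IsProPTree p →
      ∀ {P : Type v} [Group P] [Finite P], IsPGroup p P →
      ∀ [MulAction P T], (∀ g : P, Continuous fun x : T => g • x) →
      (∀ (g : P) (x : T), G.d0 (g • x) = g • G.d0 x) →
      (∀ (g : P) (x : T), G.d1 (g • x) = g • G.d1 x) →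
      Nat.card P ≤ n → ∃ v : T, G.IsVertex v ∧ ∀ g : P, g • v = v := by
  induction n with
  | zero =>
    intro T _ _ _ _ G htree P _ _ hP _ hcont hd0 hd1 hcard
    exact absurd hcard (by simp [Nat.card_pos.ne'])
  | succ n ih =>
    intro T iT icT it2 itd G htree P iG iF hP iM hcont hd0 hd1 hcard
    by_cases h1 : Nat.card P = 1
    · haveI : Subsingleton P := (Nat.card_eq_one_iff_unique.mp h1).1
      obtain ⟨v⟩ := htree.1
      refine ⟨v.1, v.2, fun g => ?_⟩
      rw [Subsingleton.elim g 1, one_smul]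
    · haveI : Nontrivial P := by
        rw [← Finite.one_lt_card_iff_nontrivial]
        have := Nat.card_pos (α := P)
        omega
      obtain ⟨g, hgord, hgc⟩ := exists_central_order p hP
      have hgp1 : g ^ p = 1 := by rw [← hgord]; exact pow_orderOf_eq_one g
      set Z := Subgroup.zpowers g with hZ
      have hle : Z ≤ Subgroup.center P := Subgroup.zpowers_le.mpr hgc
      haveI hZn : Z.Normal := by
        constructor
        intro z hz h
        have hcomm := (Subgroup.mem_center_iff.mp (hle hz)) h
        rw [hcomm, mul_assoc, mul_inv_cancel, mul_one]
        exact hz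
      -- the fixed subspace
      have hDclosed : IsClosed {x : T | g • x = x} := isClosed_eq (hcont g) continuous_id
      haveI : CompactSpace {x : T // g • x = x} :=
        isCompact_iff_compactSpace.mp hDclosed.isCompact
      set Gd := subGraph G g (hd0 g) (hd1 g) with hGd
      have htreeD : Gd.IsProPTree p := subtree_isProPTree p G htree hcont hd0 hd1 g hgp1
      -- action of the quotient group
      have hstab : ∀ (z : P), z ∈ Z → ∀ x : {x : T // g • x = x}, z • x.1 = x.1 := by
        intro z hz x
        have : Z ≤ MulAction.stabilizer P x.1 := Subgroup.zpowers_le.mpr x.2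
        exact this hz
      have hfixmem : ∀ (h : P) (x : {x : T // g • x = x}), g • (h • x.1) = h • x.1 := by
        intro h x
        have hcomm := (Subgroup.mem_center_iff.mp hgc) h
        rw [← mul_smul, ← hcomm, mul_smul, x.2]
      letI : SMul (P ⧸ Z) {x : T // g • x = x} :=
        ⟨fun q x => Quotient.liftOn' q (fun h => (⟨h • x.1, hfixmem h x⟩ : {x : T // g • x = x}))
          (by
            intro a b hab
            have hab' : a⁻¹ * b ∈ Z := QuotientGroup.leftRel_apply.mp hab
            apply Subtype.ext
            show a • x.1 = b • x.1
            have : b = a * (a⁻¹ * b) := by group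
            rw [this, mul_smul, hstab _ hab' x])⟩
      letI : MulAction (P ⧸ Z) {x : T // g • x = x} :=
        { one_smul := by
            intro x
            show Quotient.liftOn' (Quotient.mk'' 1) _ _ = x
            apply Subtype.ext
            show (1 : P) • x.1 = x.1
            exact one_smul P x.1
          mul_smul := by
            intro a b x
            induction a using Quotient.inductionOn' with
            | h a =>
              induction b using Quotient.inductionOn' with
              | h b =>
                apply Subtype.ext
                show (a * b) • x.1 = a • (b • x.1)
                exact mul_smul a b x.1 }
      haveI : Finite (P ⧸ Z) := Quotient.finite _
      have hPQ : IsPGroup p (P ⧸ Z) := hP.to_quotient Z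
      have hcontQ : ∀ q : P ⧸ Z, Continuous fun x : {x : T // g • x = x} => q • x := by
        intro q
        induction q using Quotient.inductionOn' with
        | h h =>
          show Continuous fun x : {x : T // g • x = x} => (⟨h • x.1, hfixmem h x⟩ :
            {x : T // g • x = x})
          exact Continuous.subtype_mk ((hcont h).comp continuous_subtype_val) _
      have hd0Q : ∀ (q : P ⧸ Z) (x : {x : T // g • x = x}), Gd.d0 (q • x) = q • Gd.d0 x := by
        intro q x
        induction q using Quotient.inductionOn' with
        | h h => exact Subtype.ext (hd0 h x.1)
      have hd1Q : ∀ (q : P ⧸ Z) (x : {x : T // g • x = x}), Gd.d1 (q • x) = q • Gd.d1 x := by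
        intro q x
        induction q using Quotient.inductionOn' with
        | h h => exact Subtype.ext (hd1 h x.1)
      have hcardQ : Nat.card (P ⧸ Z) ≤ n := by
        have hmul : Nat.card P = Nat.card (P ⧸ Z) * Nat.card Z :=
          Subgroup.card_eq_card_quotient_mul_card_subgroup Z
        have hZcard : Nat.card Z = p := by
          rw [hZ, Nat.card_zpowers, hgord]
        have hp2 : 2 ≤ p := hfp.out.two_le
        have hq1 : 1 ≤ Nat.card (P ⧸ Z) := Nat.card_pos
        have : Nat.card (P ⧸ Z) * 2 ≤ Nat.card (P ⧸ Z) * Nat.card Z := by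
          apply Nat.mul_le_mul_left
          omega
        rw [← hmul] at this
        omega
      obtain ⟨v, hv1, hv2⟩ := ih Gd htreeD hPQ hcontQ hd0Q hd1Q hcardQ
      refine ⟨v.1, congrArg Subtype.val hv1, ?_⟩
      intro h
      have := hv2 (Quotient.mk'' h)
      have hval := congrArg Subtype.val this
      exact hval


/-- Theorem 3.9 of Ribes–Zalesskii, "Pro-p trees and applications".
Let `G` be a finite `p`-group acting continuously on a pro-`p` tree `T` (the action
commuting with the incidence maps).  Then `G` fixes a vertex of `T`. -/
theorem finite_p_group_fixes_vertex (p : ℕ) [Fact p.Prime]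
    {T : Type*} [TopologicalSpace T] [CompactSpace T] [T2Space T]
    [TotallyDisconnectedSpace T]
    (G : ProfGraph T) (htree : G.IsProPTree p)
    (P : Type*) [Group P] [Finite P] (hP : IsPGroup p P)
    [MulAction P T]
    (hcont : ∀ g : P, Continuous fun x : T => g • x)
    (hd0 : ∀ (g : P) (x : T), G.d0 (g • x) = g • G.d0 x)
    (hd1 : ∀ (g : P) (x : T), G.d1 (g • x) = g • G.d1 x) :
    ∃ v : T, G.IsVertex v ∧ ∀ g : P, g • v = v :=
  aux_fixes p ‹_› (Nat.card P) G htree hP hcont hd0 hd1 le_rfl
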